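/- Let R be a commutative Noetherian local ring with maximal ideal m, let v be a valuation on R with values in ℕ∪{∞} (i.e., v(fg)=v(f)+v(g), v(f+g)≥min(v(f),v(g)), v(1)=0), extended to ideals by v(a) = min over f∈a of v(f). Suppose a and b are ideals with a + m^l = b + m^l for some positive integer l, and v(a) < l·v(m). Then v(a) = v(b). -/

import Mathlib

/-- A valuation on a commutative ring with values in `ℕ∞ = ℕ ∪ {∞}`. -/
structure NatValuation (R : Type*) [CommRing R] where
  v : R → ℕ∞
  map_mul : ∀ f g : R, v (f * g) = v f + v g
  map_add : ∀ f g : R, min (v f) (v g) ≤ v (f + g)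
  map_one : v 1 = 0

/-- Extension of a valuation to ideals: `v(a) = inf { v f : f ∈ a }`. -/
noncomputable def NatValuation.idealV {R : Type*} [CommRing R] (V : NatValuation R)
    (a : Ideal R) : ℕ∞ :=
  ⨅ f ∈ a, V.v f

lemma NatValuation.idealV_antitone {R : Type*} [CommRing R] (V : NatValuation R)
    {a b : Ideal R} (h : a ≤ b) : V.idealV b ≤ V.idealV a := by
  apply le_iInf₂
  intro f hf
  exact iInf₂_le f (h hf)

lemma NatValuation.idealV_le {R : Type*} [CommRing R] (V : NatValuation R)
    {a : Ideal R} {f : R} (hf : f ∈ a) : V.idealV a ≤ V.v f :=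
  iInf₂_le f hf

lemma NatValuation.idealV_sup {R : Type*} [CommRing R] (V : NatValuation R)
    (a b : Ideal R) : V.idealV (a + b) = min (V.idealV a) (V.idealV b) := by
  apply le_antisymm
  · apply le_min
    · exact V.idealV_antitone le_sup_left
    · exact V.idealV_antitone le_sup_right
  · apply le_iInf₂
    intro f hf
    rw [Submodule.add_eq_sup, Submodule.mem_sup] at hf
    obtain ⟨x, hx, y, hy, rfl⟩ := hf
    calc min (V.idealV a) (V.idealV b) ≤ min (V.v x) (V.v y) :=
          min_le_min (V.idealV_le hx) (V.idealV_le hy)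
      _ ≤ V.v (x + y) := V.map_add x y

lemma NatValuation.pow_bound {R : Type*} [CommRing R] (V : NatValuation R)
    (h0 : V.v 0 = ⊤) (m : Ideal R) (l : ℕ) :
    ∀ f ∈ m ^ l, (l : ℕ∞) * V.idealV m ≤ V.v f := by
  induction l with
  | zero => intro f _; simp
  | succ n ih =>
    intro f hf
    have hf' : f ∈ m * m ^ n := by rwa [pow_succ, mul_comm] at hf
    refine Submodule.mul_induction_on hf' ?_ ?_
    · intro x hx y hy
      rw [V.map_mul]
      have : ((n : ℕ∞) + 1) * V.idealV m = V.idealV m + (n : ℕ∞) * V.idealV m := by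
        ring
      push_cast
      rw [this]
      exact add_le_add (V.idealV_le hx) (ih y hy)
    · intro x y hx hy
      calc ((n + 1 : ℕ) : ℕ∞) * V.idealV m ≤ min (V.v x) (V.v y) := le_min hx hy
        _ ≤ V.v (x + y) := V.map_add x y

/-- Ideal-adic invariance of order: if `a + m^l = b + m^l` and `v(a) < l·v(m)`,
then `v(a) = v(b)`. -/
theorem stmt_0 {R : Type*} [CommRing R] [IsNoetherianRing R] [IsLocalRing R]
    (V : NatValuation R) (a b : Ideal R) (l : ℕ) (hl : 0 < l)
    (hab : a + (IsLocalRing.maximalIdeal R) ^ l = b + (IsLocalRing.maximalIdeal R) ^ l)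
    (hlt : V.idealV a < (l : ℕ∞) * V.idealV (IsLocalRing.maximalIdeal R)) :
    V.idealV a = V.idealV b := by
  set m := IsLocalRing.maximalIdeal R
  by_cases h0 : V.v 0 = ⊤
  · have hml : (l : ℕ∞) * V.idealV m ≤ V.idealV (m ^ l) := by
      apply le_iInf₂
      exact V.pow_bound h0 m l
    have hlt' : V.idealV a < V.idealV (m ^ l) := lt_of_lt_of_le hlt hml
    have key : V.idealV a = min (V.idealV b) (V.idealV (m ^ l)) := by
      rw [← V.idealV_sup, ← hab, V.idealV_sup, min_eq_left hlt'.le]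
    rcases le_total (V.idealV b) (V.idealV (m ^ l)) with h | h
    · rw [key, min_eq_left h]
    · rw [key, min_eq_right h] at hlt'
      exact absurd hlt' (lt_irrefl _)
  · -- v 0 ≠ ⊤ forces v ≡ 0
    have h00 : V.v 0 = V.v 0 + V.v 0 := by
      conv_lhs => rw [show (0 : R) = 0 * 0 by ring, V.map_mul]
    have hv0 : V.v 0 = 0 := by
      have := WithTop.add_left_cancel h0 (by rw [add_zero, ← h00] : V.v 0 + 0 = V.v 0 + V.v 0)
      exact this.symm
    have ha : V.idealV a = 0 := le_antisymm (hv0 ▸ V.idealV_le a.zero_mem) zero_le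
    have hm : V.idealV m = 0 := le_antisymm (hv0 ▸ V.idealV_le m.zero_mem) zero_le
    rw [ha, hm, mul_zero] at hlt
    exact absurd hlt (lt_irrefl _)
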